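/- In any group G satisfying [G'', G, G] = 1, for all u, v in G' and x, y in G with x ≡ y modulo G', we have [u^x, v] = [u^y, v]. In particular, [u^{xy}, v] = [u^{yx}, v]. -/

import Mathlib

open scoped commutatorElement

theorem stmt4 {G : Type*} [Group G]
    (h : ⁅⁅derivedSeries G 2, (⊤ : Subgroup G)⁆, (⊤ : Subgroup G)⁆ = (⊥ : Subgroup G))
    (u v : G) (hu : u ∈ derivedSeries G 1) (hv : v ∈ derivedSeries G 1) :
    (∀ x y : G, x⁻¹ * y ∈ derivedSeries G 1 →
      ⁅x⁻¹ * u * x, v⁆ = ⁅y⁻¹ * u * y, v⁆) ∧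
    (∀ x y : G, ⁅(x * y)⁻¹ * u * (x * y), v⁆ = ⁅(y * x)⁻¹ * u * (y * x), v⁆) := by
  -- elements of ⁅G'', ⊤⁆ are central
  have hz : ∀ p ∈ ⁅derivedSeries G 2, (⊤ : Subgroup G)⁆, ∀ q : G, Commute p q := by
    intro p hp q
    have hb : ⁅p, q⁆ ∈ (⊥ : Subgroup G) :=
      h ▸ Subgroup.commutator_mem_commutator hp (Subgroup.mem_top q)
    exact commutatorElement_eq_one_iff_commute.mp (Subgroup.mem_bot.mp hb)
  -- key: G'' commutes with G'
  have key : ∀ d ∈ derivedSeries G 2, ∀ w ∈ derivedSeries G 1, Commute d w := by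
    intro d hd
    have c1 : ∀ x q : G, Commute ⁅d, x⁆ q := fun x q =>
      hz _ (Subgroup.commutator_mem_commutator hd (Subgroup.mem_top x)) q
    have hmul : ∀ x y : G, ⁅d, x * y⁆ = ⁅d, x⁆ * ⁅d, y⁆ := by
      intro x y
      have e1 : ⁅d, x * y⁆ = ⁅d, x⁆ * (x * ⁅d, y⁆ * x⁻¹) := by group
      have e2 : x * ⁅d, y⁆ * x⁻¹ = ⁅d, y⁆ := by
        rw [← (c1 y x).eq, mul_assoc, mul_inv_cancel, mul_one]
      rw [e1, e2]
    let φ : G →* G := MonoidHom.mk' (fun x => ⁅d, x⁆) hmul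
    have hker : derivedSeries G 1 ≤ φ.ker := by
      rw [derivedSeries_succ, derivedSeries_zero]
      refine Subgroup.commutator_le.mpr fun p _ q _ => ?_
      have hcom : φ ⁅p, q⁆ = ⁅φ p, φ q⁆ := map_commutatorElement φ p q
      rw [MonoidHom.mem_ker, hcom]
      exact commutatorElement_eq_one_iff_commute.mpr (c1 p (φ q))
    intro w hw
    exact commutatorElement_eq_one_iff_commute.mp (hker hw)
  have hD1 : derivedSeries G 1 = ⁅(⊤ : Subgroup G), ⊤⁆ := by
    rw [derivedSeries_succ, derivedSeries_zero]
  have main : ∀ x y : G, x⁻¹ * y ∈ derivedSeries G 1 →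
      ⁅x⁻¹ * u * x, v⁆ = ⁅y⁻¹ * u * y, v⁆ := by
    intro x y hxy
    set a := x⁻¹ * u * x with ha_def
    set g := x⁻¹ * y with hg_def
    have ha : a ∈ derivedSeries G 1 := by
      have := (derivedSeries_normal G 1).conj_mem u hu x⁻¹
      simpa using this
    set c := ⁅a⁻¹, g⁻¹⁆ with hc_def
    have hc : c ∈ derivedSeries G 2 := by
      rw [hc_def, derivedSeries_succ]
      exact Subgroup.commutator_mem_commutator ((derivedSeries G 1).inv_mem ha)
        ((derivedSeries G 1).inv_mem hxy)
    have hcv : Commute c v := key _ hc v hv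
    have e1 : y⁻¹ * u * y = a * c := by
      rw [hc_def, ha_def, hg_def]; group
    have e2 : ⁅a * c, v⁆ = ⁅a, v⁆ := by
      calc ⁅a * c, v⁆ = a * (c * v) * c⁻¹ * a⁻¹ * v⁻¹ := by group
        _ = a * (v * c) * c⁻¹ * a⁻¹ * v⁻¹ := by rw [hcv.eq]
        _ = ⁅a, v⁆ := by group
    rw [e1, e2]
  refine ⟨main, fun x y => ?_⟩
  apply main
  have hyx : (x * y)⁻¹ * (y * x) = ⁅y⁻¹, x⁻¹⁆ := by group
  rw [hyx, hD1]
  exact Subgroup.commutator_mem_commutator (Subgroup.mem_top _) (Subgroup.mem_top _)
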